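/- Duality principle for semi-norms: Let C be a normed chain complex, n ∈ ℕ, and α ∈ Hₙ(C). Then ‖α‖ = sup { 1/‖φ‖ : φ ∈ Hⁿ(C'), ⟨φ, α⟩ = 1 }, with the convention sup ∅ = 0, where ⟨·,·⟩ is the Kronecker product induced by evaluation. -/

import Mathlib

set_option maxHeartbeats 1000000
set_option synthInstance.maxHeartbeats 400000


/-- Cycles of a chain complex indexed over ℕ. -/
def IsCycle (C : ℕ → Type*) [∀ n, NormedAddCommGroup (C n)] [∀ n, NormedSpace ℝ (C n)]
    (d : ∀ n, C (n + 1) →L[ℝ] C n) : ∀ n, C n → Prop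
  | 0, _ => True
  | (n + 1), x => d n x = 0

/-- Coboundaries of the dual cochain complex. -/
def IsCobdry (C : ℕ → Type*) [∀ n, NormedAddCommGroup (C n)] [∀ n, NormedSpace ℝ (C n)]
    (d : ∀ n, C (n + 1) →L[ℝ] C n) : ∀ n, (C n →L[ℝ] ℝ) → Prop
  | 0, f => f = 0
  | (n + 1), f => ∃ g : C n →L[ℝ] ℝ, f = g.comp (d n)

/-- Seminorm of the homology class of a cycle. -/
noncomputable def hSeminorm (C : ℕ → Type*) [∀ n, NormedAddCommGroup (C n)]
    [∀ n, NormedSpace ℝ (C n)] (d : ∀ n, C (n + 1) →L[ℝ] C n) (n : ℕ) (x : C n) : ℝ :=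
  sInf {r : ℝ | ∃ b : C (n + 1), r = ‖x - d n b‖}

/-- Seminorm of the cohomology class of a cocycle of the dual complex. -/
noncomputable def cSeminorm (C : ℕ → Type*) [∀ n, NormedAddCommGroup (C n)]
    [∀ n, NormedSpace ℝ (C n)] (d : ∀ n, C (n + 1) →L[ℝ] C n) (n : ℕ)
    (φ : C n →L[ℝ] ℝ) : ℝ :=
  sInf {r : ℝ | ∃ g : C n →L[ℝ] ℝ, IsCobdry C d n g ∧ r = ‖φ - g‖}

section Aux

variable {C : ℕ → Type*} [∀ n, NormedAddCommGroup (C n)] [∀ n, NormedSpace ℝ (C n)]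
variable {d : ∀ n, C (n + 1) →L[ℝ] C n}

lemma aux_inv_le {a t : ℝ} (ha : 0 < a) (h : 1 ≤ a * t) : a⁻¹ ≤ t := by
  have h2 : a * a⁻¹ ≤ a * t := by rw [mul_inv_cancel₀ ha.ne']; exact h
  exact le_of_mul_le_mul_left h2 ha

lemma zero_isCobdry (n : ℕ) : IsCobdry C d n 0 := by
  cases n with
  | zero => rfl
  | succ m => exact ⟨0, by ext x; simp⟩

lemma cobdry_comp_eq_zero (hdd : ∀ n x, d n (d (n + 1) x) = 0) (n : ℕ)
    (g : C n →L[ℝ] ℝ) (hg : IsCobdry C d n g) : g.comp (d n) = 0 := by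
  cases n with
  | zero => subst hg; ext x; simp
  | succ m =>
    obtain ⟨h, rfl⟩ := hg
    ext x
    simp [hdd m x]

lemma cobdry_apply_cycle (n : ℕ) (c : C n) (hc : IsCycle C d n c)
    (g : C n →L[ℝ] ℝ) (hg : IsCobdry C d n g) : g c = 0 := by
  cases n with
  | zero => subst hg; simp
  | succ m =>
    obtain ⟨h, rfl⟩ := hg
    have hc' : d m c = 0 := hc
    simp [ContinuousLinearMap.comp_apply, hc']

/-- Key estimate: any cocycle with `ψ c = 1` gives a lower bound `‖ψ‖⁻¹` on the
homology seminorm of `c`, and in particular `‖ψ‖ > 0`. -/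
lemma key_lower (n : ℕ) (c : C n) (ψ : C n →L[ℝ] ℝ)
    (hψd : ψ.comp (d n) = 0) (hψc : ψ c = 1) :
    0 < ‖ψ‖ ∧ ‖ψ‖⁻¹ ≤ hSeminorm C d n c := by
  have hψ0 : ψ ≠ 0 := by
    intro h; rw [h] at hψc; simp at hψc
  have hψpos : 0 < ‖ψ‖ := norm_pos_iff.2 hψ0
  refine ⟨hψpos, ?_⟩
  refine le_csInf ⟨‖c - d n 0‖, 0, rfl⟩ ?_
  rintro r ⟨b, rfl⟩
  have hb : ψ (d n b) = 0 := by
    have := congrFun (congrArg (fun f : C (n+1) →L[ℝ] ℝ => (f : C (n+1) → ℝ)) hψd) b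
    simpa using this
  have h1 : (1 : ℝ) ≤ ‖ψ‖ * ‖c - d n b‖ := by
    have : ψ (c - d n b) = 1 := by rw [map_sub, hψc, hb, sub_zero]
    calc (1 : ℝ) = ‖ψ (c - d n b)‖ := by rw [this]; simp
    _ ≤ ‖ψ‖ * ‖c - d n b‖ := ψ.le_opNorm _
  exact aux_inv_le hψpos h1

end Aux

/-- Duality principle for semi-norms: for a normed chain complex `C`,
`n ∈ ℕ` and a class `α ∈ Hₙ(C)` (represented by a cycle `c`),
`‖α‖ = sup { 1/‖φ‖ : φ ∈ Hⁿ(C'), ⟨φ, α⟩ = 1 }`, with `sup ∅ = 0`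
(which is the convention of `sSup` on `ℝ`). The Kronecker product `⟨φ, α⟩` is given by
evaluating a representing cocycle on `c`. -/
theorem stmt7
    (C : ℕ → Type*) [∀ n, NormedAddCommGroup (C n)] [∀ n, NormedSpace ℝ (C n)]
    (d : ∀ n, C (n + 1) →L[ℝ] C n)
    (hdd : ∀ n x, d n (d (n + 1) x) = 0) :
    ∀ n, ∀ c : C n, IsCycle C d n c →
      hSeminorm C d n c =
        sSup {r : ℝ | ∃ φ : C n →L[ℝ] ℝ,
          φ.comp (d n) = 0 ∧ φ c = 1 ∧ r = (cSeminorm C d n φ)⁻¹} := by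
  intro n c hc
  set D := hSeminorm C d n c with hD
  set T := {r : ℝ | ∃ φ : C n →L[ℝ] ℝ,
      φ.comp (d n) = 0 ∧ φ c = 1 ∧ r = (cSeminorm C d n φ)⁻¹} with hT
  have hD0 : 0 ≤ D := by
    refine le_csInf ⟨‖c - d n 0‖, 0, rfl⟩ ?_
    rintro r ⟨b, rfl⟩; exact norm_nonneg _
  -- For every cocycle φ in T, the cohomology seminorm of φ is at least D⁻¹.
  have key2 : ∀ φ : C n →L[ℝ] ℝ, φ.comp (d n) = 0 → φ c = 1 →
      D⁻¹ ≤ cSeminorm C d n φ ∧ 0 < D := by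
    intro φ hφd hφc
    have hDpos : 0 < D := by
      obtain ⟨hψpos, hle⟩ := key_lower n c φ hφd hφc
      exact lt_of_lt_of_le (inv_pos.2 hψpos) hle
    refine ⟨?_, hDpos⟩
    refine le_csInf ⟨‖φ - 0‖, 0, zero_isCobdry n, rfl⟩ ?_
    rintro r ⟨g, hg, rfl⟩
    have hψd : (φ - g).comp (d n) = 0 := by
      rw [ContinuousLinearMap.sub_comp, hφd, cobdry_comp_eq_zero hdd n g hg, sub_zero]
    have hψc : (φ - g) c = 1 := by
      simp [hφc, cobdry_apply_cycle n c hc g hg]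
    obtain ⟨hψpos, hle⟩ := key_lower n c (φ - g) hψd hψc
    -- ‖φ - g‖⁻¹ ≤ D  and  0 < ‖φ - g‖  give  D⁻¹ ≤ ‖φ - g‖
    have := aux_inv_le hDpos (by
      rw [mul_comm]
      have h1 : (1 : ℝ) = ‖φ - g‖ * ‖φ - g‖⁻¹ := (mul_inv_cancel₀ hψpos.ne').symm
      calc (1 : ℝ) = ‖φ - g‖ * ‖φ - g‖⁻¹ := h1
      _ ≤ ‖φ - g‖ * D := by
        exact mul_le_mul_of_nonneg_left hle (norm_nonneg _))
    exact this
  rcases eq_or_lt_of_le hD0 with hDz | hDpos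
  · -- D = 0 : the set T is empty
    have hTe : T = ∅ := by
      ext r
      simp only [hT, Set.mem_setOf_eq, Set.mem_empty_iff_false, iff_false]
      rintro ⟨φ, hφd, hφc, rfl⟩
      exact absurd (key2 φ hφd hφc).2 (by rw [← hDz]; exact lt_irrefl 0)
    rw [hTe, Real.sSup_empty, ← hDz]
  · -- D > 0 : construct the extremal cocycle via Hahn–Banach on the quotient.
    -- The closed subspace of boundaries:
    set S : Submodule ℝ (C n) := LinearMap.range (d n : C (n+1) →ₗ[ℝ] C n) with hS
    set K : Submodule ℝ (C n) := S.topologicalClosure with hK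
    haveI : IsClosed (K : Set (C n)) := S.isClosed_topologicalClosure
    -- identify D with the infDist to S
    have hA : {r : ℝ | ∃ b : C (n + 1), r = ‖c - d n b‖}
        = (fun y => dist c y) '' (S : Set (C n)) := by
      ext r
      constructor
      · rintro ⟨b, rfl⟩
        exact ⟨d n b, ⟨b, rfl⟩, by simp [dist_eq_norm]⟩
      · rintro ⟨y, ⟨b, rfl⟩, rfl⟩
        exact ⟨b, by simp [dist_eq_norm]⟩
    have hDist : Metric.infDist c (S : Set (C n)) = D := by
      rw [hD, hSeminorm, hA, Metric.infDist_eq_iInf, sInf_image']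
    -- the quotient norm of the class of c
    have hmkc : ‖(Submodule.Quotient.mk c : C n ⧸ K)‖ = D := by
      have h1 : ‖(Submodule.Quotient.mk c : C n ⧸ K)‖
          = Metric.infDist c (K : Set (C n)) := QuotientAddGroup.norm_mk c
      rw [h1, hK, Submodule.topologicalClosure_coe, Metric.infDist_closure, hDist]
    have hmkc0 : (Submodule.Quotient.mk c : C n ⧸ K) ≠ 0 := by
      intro h
      rw [h, norm_zero] at hmkc
      exact absurd hmkc.symm (ne_of_gt hDpos)
    obtain ⟨g, hg1, hg2⟩ := exists_dual_vector ℝ (Submodule.Quotient.mk c : C n ⧸ K)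
      (by rw [hmkc]; exact ne_of_gt hDpos)
    -- the continuous projection onto the quotient
    let π : C n →L[ℝ] C n ⧸ K := ⟨K.mkQ, continuous_quot_mk⟩
    have hπ_apply : ∀ x : C n, π x = Submodule.Quotient.mk x := fun _ => rfl
    have hπ_norm : ‖π‖ ≤ 1 := by
      refine ContinuousLinearMap.opNorm_le_bound _ zero_le_one ?_
      intro x
      rw [one_mul, hπ_apply]
      exact Submodule.Quotient.norm_mk_le K x
    set φ₀ : C n →L[ℝ] ℝ := D⁻¹ • (g.comp π) with hφ₀
    have hφ₀c : φ₀ c = 1 := by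
      have : g (Submodule.Quotient.mk c) = D := by
        rw [hg2, hmkc]; norm_num
      rw [hφ₀]
      simp only [ContinuousLinearMap.smul_apply, ContinuousLinearMap.comp_apply, hπ_apply, this,
        smul_eq_mul]
      field_simp
    have hφ₀d : φ₀.comp (d n) = 0 := by
      ext x
      have hx : Submodule.Quotient.mk (d n x) = (0 : C n ⧸ K) := by
        rw [Submodule.Quotient.mk_eq_zero]
        exact Submodule.le_topologicalClosure S ⟨x, rfl⟩
      simp only [ContinuousLinearMap.comp_apply, ContinuousLinearMap.smul_apply,
        ContinuousLinearMap.zero_apply, hφ₀, hπ_apply, hx, map_zero, smul_eq_mul, mul_zero]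
    have hφ₀norm : ‖φ₀‖ ≤ D⁻¹ := by
      rw [hφ₀]
      calc ‖D⁻¹ • g.comp π‖ ≤ ‖D⁻¹‖ * ‖g.comp π‖ := ContinuousLinearMap.opNorm_smul_le _ _
      _ ≤ ‖D⁻¹‖ * (‖g‖ * ‖π‖) := by
          exact mul_le_mul_of_nonneg_left (ContinuousLinearMap.opNorm_comp_le _ _) (norm_nonneg _)
      _ ≤ D⁻¹ * (1 * 1) := by
          rw [Real.norm_eq_abs, abs_of_nonneg (inv_nonneg.2 hD0)]
          refine mul_le_mul_of_nonneg_left ?_ (inv_nonneg.2 hD0)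
          rw [hg1]
          exact mul_le_mul_of_nonneg_left hπ_norm zero_le_one
      _ = D⁻¹ := by ring
    -- the cohomology seminorm of φ₀ is exactly D⁻¹
    have hcs_le : cSeminorm C d n φ₀ ≤ D⁻¹ := by
      refine le_trans (csInf_le ?_ ⟨0, zero_isCobdry n, by rw [sub_zero]⟩) ?_
      · refine ⟨0, ?_⟩
        rintro r ⟨h, _, rfl⟩; exact norm_nonneg _
      · exact hφ₀norm
    have hcs_ge : D⁻¹ ≤ cSeminorm C d n φ₀ := (key2 φ₀ hφ₀d hφ₀c).1
    have hcs : cSeminorm C d n φ₀ = D⁻¹ := le_antisymm hcs_le hcs_ge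
    have hmem : D ∈ T := ⟨φ₀, hφ₀d, hφ₀c, by rw [hcs, inv_inv]⟩
    -- every element of T is at most D
    have hub : ∀ r ∈ T, r ≤ D := by
      rintro r ⟨φ, hφd, hφc, rfl⟩
      obtain ⟨hge, _⟩ := key2 φ hφd hφc
      have hpos : 0 < cSeminorm C d n φ := lt_of_lt_of_le (inv_pos.2 hDpos) hge
      have h2 : (cSeminorm C d n φ)⁻¹ ≤ (D⁻¹)⁻¹ := by
        gcongr
      rwa [inv_inv] at h2
    exact le_antisymm (le_csSup ⟨D, hub⟩ hmem) (csSup_le ⟨D, hmem⟩ hub)
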